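/- The cell-centered Hartley matrix is related to the node-centered Hartley matrices by the shift identity H(n) = √n·(Ȟ⁺·C + Ȟ⁻·S), where C = Diag(cos(kπ/n), k = 0,…,n−1) and S = Diag(sin(kπ/n), k = 0,…,n−1). -/

import Mathlib

open Matrix Real

/-- The cell-centered Hartley matrix `H(n)` with entries
`H(n)_{j,k} = cos(2(j+1/2)kπ/n) + sin(2(j+1/2)kπ/n)`. -/
noncomputable def hartley (n : ℕ) : Matrix (Fin n) (Fin n) ℝ :=
  fun j k =>
    Real.cos (2 * ((j.val : ℝ) + 1/2) * (k.val : ℝ) * Real.pi / n) +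
    Real.sin (2 * ((j.val : ℝ) + 1/2) * (k.val : ℝ) * Real.pi / n)

/-- The node-centered cosine matrix `(Ȟ_c)_{j,k} = n^{−1/2}·cos(2jkπ/n)`. -/
noncomputable def Hc (n : ℕ) : Matrix (Fin n) (Fin n) ℝ :=
  fun j k => Real.cos (2 * (j.val : ℝ) * (k.val : ℝ) * Real.pi / n) / Real.sqrt n

/-- The node-centered sine matrix `(Ȟ_s)_{j,k} = n^{−1/2}·sin(2jkπ/n)`. -/
noncomputable def Hs (n : ℕ) : Matrix (Fin n) (Fin n) ℝ :=
  fun j k => Real.sin (2 * (j.val : ℝ) * (k.val : ℝ) * Real.pi / n) / Real.sqrt n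

/-- The node-centered Hartley matrix `Ȟ⁺ = Ȟ_c + Ȟ_s`. -/
noncomputable def Hp (n : ℕ) : Matrix (Fin n) (Fin n) ℝ := Hc n + Hs n

/-- The node-centered Hartley matrix `Ȟ⁻ = Ȟ_c − Ȟ_s`. -/
noncomputable def Hm (n : ℕ) : Matrix (Fin n) (Fin n) ℝ := Hc n - Hs n

/-- The shift identity `H(n) = √n·(Ȟ⁺·C + Ȟ⁻·S)` with
`C = Diag(cos(kπ/n))` and `S = Diag(sin(kπ/n))`. -/
theorem hartley_shift (n : ℕ) (hn : 1 ≤ n) :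
    hartley n =
      Real.sqrt n •
        (Hp n * Matrix.diagonal (fun k : Fin n => Real.cos ((k.val : ℝ) * Real.pi / n)) +
         Hm n * Matrix.diagonal (fun k : Fin n => Real.sin ((k.val : ℝ) * Real.pi / n))) := by
  have hn0 : (n : ℝ) ≠ 0 := Nat.cast_ne_zero.mpr (Nat.one_le_iff_ne_zero.mp hn)
  have hs : Real.sqrt n ≠ 0 := Real.sqrt_ne_zero'.mpr (by positivity)
  ext j k
  simp only [hartley, Hp, Hm, Hc, Hs, Matrix.smul_apply, Matrix.add_apply,
    Matrix.mul_diagonal, Matrix.sub_apply, smul_eq_mul]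
  have hang : 2 * ((j.val : ℝ) + 1/2) * (k.val : ℝ) * Real.pi / n =
      2 * (j.val : ℝ) * (k.val : ℝ) * Real.pi / n + (k.val : ℝ) * Real.pi / n := by
    field_simp
  rw [hang, Real.cos_add, Real.sin_add]
  field_simp
  ring
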